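/- Let μ be a regular conditional distribution for P given 𝓐 with 𝓑 countably generated, and let σ(μ) ⊂ 𝓐 be the σ-field generated by the maps ω ↦ μ(ω)(B), B ∈ 𝓑. Then σ(μ) is countably generated and there exists T ∈ 𝓐 with P(T) = 1 such that for every ω ∈ T, every C ∈ 𝓑, and every bounded σ(μ)-measurable h : Ω → ℝ, ∫_C h(x) μ(ω)(dx) = h(ω) μ(ω)(C). -/

import Mathlib

open MeasureTheory MeasurableSpace Set Filter
open scoped ENNReal

/-- A regular conditional distribution for `P` given the sub-σ-field `𝓐`. -/
def IsRCD {Ω : Type*} [m𝓑 : MeasurableSpace Ω] (𝓐 : MeasurableSpace Ω)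
    (P : @Measure Ω m𝓑) (μ : Ω → @Measure Ω m𝓑) : Prop :=
  (∀ ω, IsProbabilityMeasure (μ ω)) ∧
  (∀ B : Set Ω, MeasurableSet[m𝓑] B → Measurable[𝓐] fun ω => μ ω B) ∧
  (∀ B : Set Ω, MeasurableSet[m𝓑] B → ∀ A : Set Ω, MeasurableSet[𝓐] A →
    ∫⁻ ω in A, μ ω B ∂P = P (A ∩ B))

private lemma aux_foldr_inter {α : Type*} (l1 l2 : List (Set α)) :
    (l1 ++ l2).foldr (· ∩ ·) Set.univ =
      l1.foldr (· ∩ ·) Set.univ ∩ l2.foldr (· ∩ ·) Set.univ := by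
  induction l1 with
  | nil => simp
  | cons a l ih => simp [ih, Set.inter_assoc]

private lemma aux_countable_generatePiSystem {α : Type*} {S : Set (Set α)}
    (hS : S.Countable) : (generatePiSystem S).Countable := by
  haveI := hS.to_subtype
  have hsub : generatePiSystem S ⊆
      Set.range (fun l : List S => (l.map Subtype.val).foldr (· ∩ ·) Set.univ) := by
    intro t ht
    induction ht with
    | base h_s =>
      rename_i s
      exact ⟨[⟨s, h_s⟩], by simp⟩
    | inter _ _ _ ihs iht =>
      obtain ⟨l1, hl1⟩ := ihs
      obtain ⟨l2, hl2⟩ := iht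
      exact ⟨l1 ++ l2, by simp only [List.map_append, aux_foldr_inter, hl1, hl2]⟩
  exact Set.Countable.mono hsub (Set.countable_range _)

/-- σ(μ) ⊂ 𝓐 is countably generated, and a.s. every bounded
σ(μ)-measurable h satisfies ∫_C h dμ(ω) = h(ω) μ(ω)(C). -/
theorem stmt_16 {Ω : Type*} [m𝓑 : MeasurableSpace Ω] [CountablyGenerated Ω]
    (P : @Measure Ω m𝓑) (hP : IsProbabilityMeasure P)
    (𝓐 : MeasurableSpace Ω) (h𝓐 : 𝓐 ≤ m𝓑)
    (μ : Ω → @Measure Ω m𝓑) (hμ : @IsRCD Ω m𝓑 𝓐 P μ)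
    (σμ : MeasurableSpace Ω)
    (hσμ : σμ = ⨆ B ∈ {B : Set Ω | MeasurableSet[m𝓑] B},
      MeasurableSpace.comap (fun ω => μ ω B) inferInstance) :
    σμ ≤ 𝓐 ∧ (∃ S : Set (Set Ω), S.Countable ∧ σμ = MeasurableSpace.generateFrom S) ∧
      ∃ T : Set Ω, MeasurableSet[𝓐] T ∧ P T = 1 ∧
        ∀ ω ∈ T, ∀ C : Set Ω, MeasurableSet[m𝓑] C → ∀ h : Ω → ℝ,
          Measurable[σμ] h → (∃ M : ℝ, ∀ x, |h x| ≤ M) →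
            ∫ x in C, h x ∂(μ ω) = h ω * (μ ω C).toReal := by
  obtain ⟨hprob, hmeas, hint⟩ := hμ
  -- σμ ≤ 𝓐
  have hσ𝓐 : σμ ≤ 𝓐 := by
    rw [hσμ]
    exact iSup₂_le fun B hB => measurable_iff_comap_le.1 (hmeas B hB)
  -- countable π-system generating m𝓑
  obtain ⟨b0, hb0c, hb0⟩ :=
    (@MeasurableSpace.CountablyGenerated.isCountablyGenerated Ω m𝓑 ‹_›)
  set 𝒞 : Set (Set Ω) := generatePiSystem b0 with h𝒞def
  have h𝒞count : 𝒞.Countable := aux_countable_generatePiSystem hb0c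
  have h𝒞pi : IsPiSystem 𝒞 := isPiSystem_generatePiSystem _
  have h𝒞gen : MeasurableSpace.generateFrom 𝒞 = m𝓑 := by
    rw [h𝒞def, generateFrom_generatePiSystem_eq, ← hb0]
  have h𝒞meas : ∀ s ∈ 𝒞, MeasurableSet[m𝓑] s := fun s hs => by
    rw [← h𝒞gen]; exact measurableSet_generateFrom hs
  -- countable generating set of the Borel σ-algebra on ℝ≥0∞
  obtain ⟨bE, hbEc, hbE⟩ :=
    (inferInstance : CountablyGenerated ℝ≥0∞).isCountablyGenerated
  haveI : Countable ↥𝒞 := h𝒞count.to_subtype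
  -- the candidate countable sup
  set 𝓜 : MeasurableSpace Ω :=
    ⨆ B : 𝒞, MeasurableSpace.comap (fun ω => μ ω B) inferInstance with h𝓜def
  set S : Set (Set Ω) := ⋃ B : 𝒞, (fun s => (fun ω => μ ω B) ⁻¹' s) '' bE with hSdef
  have hScount : S.Countable :=
    Set.countable_iUnion fun B => hbEc.image _
  have h𝓜gen : 𝓜 = MeasurableSpace.generateFrom S := by
    have h1 : ∀ B : 𝒞, MeasurableSpace.comap (fun ω => μ ω B)
        (inferInstance : MeasurableSpace ℝ≥0∞)
        = MeasurableSpace.generateFrom ((fun s => (fun ω => μ ω B) ⁻¹' s) '' bE) := by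
      intro B
      conv_lhs => rw [show (inferInstance : MeasurableSpace ℝ≥0∞)
        = MeasurableSpace.generateFrom bE from hbE]
      exact MeasurableSpace.comap_generateFrom
    rw [h𝓜def, hSdef, ← MeasurableSpace.iSup_generateFrom]
    exact iSup_congr h1
  -- every measurable B gives an 𝓜-measurable map
  have hall : ∀ B : Set Ω, MeasurableSet[m𝓑] B → Measurable[𝓜] (fun ω => μ ω B) := by
    intro B hB
    refine @MeasurableSpace.induction_on_inter Ω m𝓑 (fun t _ => Measurable[𝓜] fun ω => μ ω t)
      𝒞 h𝒞gen.symm h𝒞pi ?_ ?_ ?_ ?_ _ hB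
    · simp only [measure_empty]; exact measurable_const
    · intro t ht
      exact measurable_iff_comap_le.2
        (le_iSup (fun B : 𝒞 => MeasurableSpace.comap (fun ω => μ ω B) inferInstance) ⟨t, ht⟩)
    · intro t ht hC
      have : (fun ω => μ ω tᶜ) = fun ω => 1 - μ ω t := by
        funext ω
        haveI := hprob ω
        rw [measure_compl ht (measure_ne_top _ _), measure_univ]
      rw [this]
      exact measurable_const.sub hC
    · intro f hdisj hfm hC
      have : (fun ω => μ ω (⋃ i, f i)) = fun ω => ∑' i, μ ω (f i) := by
        funext ω; exact measure_iUnion hdisj hfm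
      rw [this]
      exact Measurable.ennreal_tsum hC
  have hσμ𝓜 : σμ = 𝓜 := by
    apply le_antisymm
    · rw [hσμ]
      exact iSup₂_le fun B hB => measurable_iff_comap_le.1 (hall B hB)
    · rw [h𝓜def, hσμ]
      exact iSup_le fun B =>
        le_iSup₂ (f := fun B (_ : B ∈ {B : Set Ω | MeasurableSet[m𝓑] B}) =>
          MeasurableSpace.comap (fun ω => μ ω B) inferInstance) (B : Set Ω) (h𝒞meas B B.2)
  refine ⟨hσ𝓐, ⟨S, hScount, hσμ𝓜.trans h𝓜gen⟩, ?_⟩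
  -- countable π-system generating σμ
  set 𝒟 : Set (Set Ω) := generatePiSystem S with h𝒟def
  have h𝒟count : 𝒟.Countable := aux_countable_generatePiSystem hScount
  have h𝒟pi : IsPiSystem 𝒟 := isPiSystem_generatePiSystem _
  have h𝒟gen : MeasurableSpace.generateFrom 𝒟 = σμ := by
    rw [h𝒟def, generateFrom_generatePiSystem_eq, ← h𝓜gen, hσμ𝓜]
  have h𝒟meas : ∀ A ∈ 𝒟, MeasurableSet[σμ] A := fun A hA => by
    rw [← h𝒟gen]; exact measurableSet_generateFrom hA
  -- the key a.e. identity
  have key : ∀ A ∈ 𝒟, ∀ B : Set Ω, MeasurableSet[m𝓑] B →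
      ∀ᵐ ω ∂P, μ ω (A ∩ B) = A.indicator (fun ω' => μ ω' B) ω := by
    intro A hA B hB
    have hA𝓐 : MeasurableSet[𝓐] A := hσ𝓐 A (h𝒟meas A hA)
    have hA𝓑 : MeasurableSet[m𝓑] A := h𝓐 A hA𝓐
    have hf : Measurable[𝓐] (fun ω => μ ω (A ∩ B)) := hmeas _ (hA𝓑.inter hB)
    have hg : Measurable[𝓐] (fun ω => A.indicator (fun ω' => μ ω' B) ω) :=
      (hmeas B hB).indicator hA𝓐
    refine ae_eq_of_ae_eq_trim (hm := h𝓐)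
      (ae_eq_of_forall_setLIntegral_eq_of_sigmaFinite hf hg ?_)
    intro s hs _
    rw [restrict_trim h𝓐 P hs, lintegral_trim h𝓐 hf, lintegral_trim h𝓐 hg]
    rw [hint _ (hA𝓑.inter hB) s hs]
    have : ∫⁻ ω in s, A.indicator (fun ω' => μ ω' B) ω ∂P
        = ∫⁻ ω in A, μ ω B ∂(P.restrict s) := lintegral_indicator hA𝓑 _
    rw [this, Measure.restrict_restrict hA𝓑, hint B hB (A ∩ s) (hA𝓐.inter hs)]
    congr 1
    rw [Set.inter_comm s (A ∩ B), Set.inter_assoc, Set.inter_comm B s, ← Set.inter_assoc]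
  -- the full-measure set T
  set 𝒞' : Set (Set Ω) := insert Set.univ 𝒞 with h𝒞'def
  have h𝒞'count : 𝒞'.Countable := h𝒞count.insert _
  have h𝒞'meas : ∀ s ∈ 𝒞', MeasurableSet[m𝓑] s := by
    intro s hs
    rcases hs with rfl | hs
    · exact MeasurableSet.univ
    · exact h𝒞meas s hs
  set T : Set Ω := ⋂ (A ∈ 𝒟) (B ∈ 𝒞'),
    {ω | μ ω (A ∩ B) = A.indicator (fun ω' => μ ω' B) ω} with hTdef
  have hTmeas : MeasurableSet[𝓐] T := by
    refine MeasurableSet.biInter h𝒟count fun A hA => ?_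
    refine MeasurableSet.biInter h𝒞'count fun B hB => ?_
    have hA𝓐 : MeasurableSet[𝓐] A := hσ𝓐 A (h𝒟meas A hA)
    have hA𝓑 : MeasurableSet[m𝓑] A := h𝓐 A hA𝓐
    exact measurableSet_eq_fun (hmeas _ (hA𝓑.inter (h𝒞'meas B hB)))
      ((hmeas B (h𝒞'meas B hB)).indicator hA𝓐)
  have hT1 : P T = 1 := by
    have hae0 : ∀ᵐ ω ∂P, ∀ A, A ∈ 𝒟 → ∀ B, B ∈ 𝒞' →
        μ ω (A ∩ B) = A.indicator (fun ω' => μ ω' B) ω := by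
      refine (ae_ball_iff h𝒟count).2 fun A hA => ?_
      refine (ae_ball_iff h𝒞'count).2 fun B hB => ?_
      exact key A hA B (h𝒞'meas B hB)
    have hae : ∀ᵐ ω ∂P, ω ∈ T := by
      refine hae0.mono fun ω hω => ?_
      rw [hTdef]
      simp only [Set.mem_iInter, Set.mem_setOf_eq]
      exact hω
    refine (prob_compl_eq_zero_iff (μ := P) (h𝓐 T hTmeas)).1 ?_
    rw [ae_iff] at hae
    exact hae
  refine ⟨T, hTmeas, hT1, ?_⟩
  intro ω hω C hC h hmh _
  have hωT : ∀ A ∈ 𝒟, ∀ B ∈ 𝒞', μ ω (A ∩ B) = A.indicator (fun ω' => μ ω' B) ω := by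
    intro A hA B hB
    rw [hTdef] at hω
    simp_rw [Set.mem_iInter] at hω
    exact hω A hA B hB
  haveI := hprob ω
  -- step 1: extend in B
  have step1 : ∀ A ∈ 𝒟, ∀ C' : Set Ω, MeasurableSet[m𝓑] C' →
      μ ω (A ∩ C') = A.indicator (fun _ => (1 : ℝ≥0∞)) ω * μ ω C' := by
    intro A hA
    have hA𝓑 : MeasurableSet[m𝓑] A := h𝓐 A (hσ𝓐 A (h𝒟meas A hA))
    have hν : (μ ω).restrict A = (A.indicator (fun _ => (1 : ℝ≥0∞)) ω) • μ ω := by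
      refine ext_of_generate_finite 𝒞 h𝒞gen.symm h𝒞pi ?_ ?_
      · intro s hs
        rw [Measure.restrict_apply (h𝒞meas s hs), Measure.smul_apply, smul_eq_mul,
          Set.inter_comm, hωT A hA s (Set.mem_insert_of_mem _ hs)]
        by_cases hmem : ω ∈ A <;> simp [hmem]
      · rw [Measure.restrict_apply_univ, Measure.smul_apply, smul_eq_mul, measure_univ,
          mul_one]
        have := hωT A hA Set.univ (Set.mem_insert _ _)
        rw [Set.inter_univ] at this
        rw [this]
        by_cases hmem : ω ∈ A <;> simp [hmem]
    intro C' hC'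
    rw [Set.inter_comm, ← Measure.restrict_apply hC', hν, Measure.smul_apply, smul_eq_mul]
  -- step 2: extend in A (as an equality of measures on σμ)
  have hle : σμ ≤ m𝓑 := hσ𝓐.trans h𝓐
  have hmeq : ((μ ω).restrict C).trim hle = (μ ω C) • @Measure.dirac Ω σμ ω := by
    haveI : IsFiniteMeasure (((μ ω).restrict C).trim hle) := isFiniteMeasure_trim hle
    refine @ext_of_generate_finite Ω σμ _ _ 𝒟 h𝒟gen.symm h𝒟pi _ ?_ ?_
    · intro A hA
      rw [trim_measurableSet_eq hle (h𝒟meas A hA),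
        Measure.restrict_apply (hle A (h𝒟meas A hA)), step1 A hA C hC,
        Measure.smul_apply, @Measure.dirac_apply' Ω σμ A ω (h𝒟meas A hA)]
      by_cases hmem : ω ∈ A <;> simp [hmem, mul_comm]
    · rw [trim_measurableSet_eq hle MeasurableSet.univ, Measure.restrict_apply_univ,
        Measure.smul_apply, measure_univ, smul_eq_mul, mul_one]
  -- conclusion
  have hsm : StronglyMeasurable[σμ] h := hmh.stronglyMeasurable
  calc ∫ x in C, h x ∂(μ ω) = ∫ x, h x ∂(((μ ω).restrict C).trim hle) :=
        integral_trim hle hsm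
    _ = ∫ x, h x ∂((μ ω C) • @Measure.dirac Ω σμ ω) := by rw [hmeq]
    _ = (μ ω C).toReal • ∫ x, h x ∂(@Measure.dirac Ω σμ ω) := integral_smul_measure _ _
    _ = (μ ω C).toReal * h ω := by
        rw [@integral_dirac' Ω ℝ _ _ _ σμ h ω hsm, smul_eq_mul]
    _ = h ω * (μ ω C).toReal := mul_comm _ _
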